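/- Nearly uniform capacities: fix an integer K ≥ 2, set N = 2K, M = 2K³ and ε = 1/K³. Let A* be the N×N block-diagonal matrix with K diagonal 2×2 blocks each filled with M, and B* = -A*. Suppose A, B are N×N matrices with all entries of A - A* and B - B* in [0,1]. Then for every 1.0-well-supported Nash equilibrium (x,y) of (A,B), and for every k ∈ {1,...,K}, the pair sums satisfy 1/K - ε ≤ x_{2k-1} + x_{2k} ≤ 1/K + ε and 1/K - ε ≤ y_{2k-1} + y_{2k} ≤ 1/K + ε. -/

import Mathlib

private lemma sum_pairs (n : ℕ) (h : ℕ → ℝ) :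
    ∑ i ∈ Finset.range (2 * n), h i
      = ∑ b ∈ Finset.range n, (h (2 * b) + h (2 * b + 1)) := by
  induction n with
  | zero => simp
  | succ n ih =>
    have e : 2 * (n + 1) = (2 * n + 1) + 1 := by ring
    rw [e, Finset.sum_range_succ, Finset.sum_range_succ, ih, Finset.sum_range_succ]
    ring

private lemma sum_block {K : ℕ} (M : ℝ) (b : ℕ) (hb : b < K) (w : Fin (2*K) → ℝ) :
    ∑ j : Fin (2*K), (if (j:ℕ)/2 = b then M else 0) * w j
      = M * (w ⟨2*b, by omega⟩ + w ⟨2*b+1, by omega⟩) := by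
  set ww : ℕ → ℝ := fun n => if h : n < 2*K then w ⟨n,h⟩ else 0 with hww
  have h1 : ∑ j : Fin (2*K), (if (j:ℕ)/2 = b then M else 0) * w j
      = ∑ n ∈ Finset.range (2*K), (if n/2 = b then M else 0) * ww n := by
    rw [← Fin.sum_univ_eq_sum_range (fun n => (if n/2 = b then M else 0) * ww n) (2*K)]
    refine Finset.sum_congr rfl fun j _ => ?_
    simp [ww, j.isLt]
  rw [h1, sum_pairs]
  have h2 : ∀ b' ∈ Finset.range K,
      ((if (2*b')/2 = b then M else 0) * ww (2*b')
        + (if (2*b'+1)/2 = b then M else 0) * ww (2*b'+1))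
      = if b = b' then M * (ww (2*b') + ww (2*b'+1)) else 0 := by
    intro b' _
    have e1 : (2*b')/2 = b' := by omega
    have e2 : (2*b'+1)/2 = b' := by omega
    rw [e1, e2]
    by_cases h : b' = b
    · subst h; simp; ring
    · simp [h, Ne.symm h]
  rw [Finset.sum_congr rfl h2, Finset.sum_ite_eq]
  simp [Finset.mem_range.mpr hb, ww, show 2*b < 2*K by omega, show 2*b+1 < 2*K by omega]

private lemma pair_idx0 {K : ℕ} (b : Fin K) : 2*(b:ℕ) < 2*K := by have := b.isLt; omega

private lemma pair_idx1 {K : ℕ} (b : Fin K) : 2*(b:ℕ)+1 < 2*K := by have := b.isLt; omega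

private lemma pair_sum {K : ℕ} (w : Fin (2*K) → ℝ) :
    ∑ b : Fin K, (w ⟨2*(b:ℕ), pair_idx0 b⟩
        + w ⟨2*(b:ℕ)+1, pair_idx1 b⟩) = ∑ i, w i := by
  set ww : ℕ → ℝ := fun n => if h : n < 2*K then w ⟨n,h⟩ else 0 with hww
  have h1 : ∑ i, w i = ∑ n ∈ Finset.range (2*K), ww n := by
    rw [← Fin.sum_univ_eq_sum_range ww (2*K)]
    exact Finset.sum_congr rfl fun j _ => by simp [ww, j.isLt]
  rw [h1, sum_pairs, ← Fin.sum_univ_eq_sum_range (fun n => ww (2*n) + ww (2*n+1)) K]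
  refine Finset.sum_congr rfl fun b _ => ?_
  have hb := b.isLt
  simp [ww, show 2*(b:ℕ) < 2*K by omega, show 2*(b:ℕ)+1 < 2*K by omega]

private lemma abstract_bounds (K : ℕ) (hK : 2 ≤ K) (f g : Fin K → ℝ)
    (hf1 : ∑ b, f b = 1) (hg1 : ∑ b, g b = 1)
    (P1 : ∀ b c, f b > f c + 1 / (K : ℝ) ^ 3 → g b = 0)
    (P2 : ∀ b c, g b > g c + 1 / (K : ℝ) ^ 3 → f c = 0) :
    ∀ b, (1/(K:ℝ) - 1/(K:ℝ)^3 ≤ f b ∧ f b ≤ 1/(K:ℝ) + 1/(K:ℝ)^3) ∧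
      (1/(K:ℝ) - 1/(K:ℝ)^3 ≤ g b ∧ g b ≤ 1/(K:ℝ) + 1/(K:ℝ)^3) := by
  have hK0 : (0:ℝ) < K := by positivity
  have hK2 : (2:ℝ) ≤ K := by exact_mod_cast hK
  have hε : 1/(K:ℝ)^3 < 1/(K:ℝ) := by
    apply one_div_lt_one_div_of_lt hK0
    nlinarith [mul_lt_mul_of_pos_left (show (1:ℝ) < (K:ℝ)*(K:ℝ) by nlinarith) hK0]
  have hKinv : 0 < 1/(K:ℝ) := by positivity
  have hne : (Finset.univ : Finset (Fin K)).Nonempty :=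
    ⟨⟨0, by omega⟩, Finset.mem_univ _⟩
  have avg : ∀ (h : Fin K → ℝ), (∑ b, h b) = 1 → ∃ m, (∀ b, h b ≤ h m) ∧ 1/(K:ℝ) ≤ h m := by
    intro h hs
    obtain ⟨m, _, hm⟩ := Finset.exists_max_image Finset.univ h hne
    refine ⟨m, fun b => hm b (Finset.mem_univ b), ?_⟩
    have : (1:ℝ) ≤ K * h m := by
      calc (1:ℝ) = ∑ b, h b := hs.symm
        _ ≤ ∑ _b : Fin K, h m := Finset.sum_le_sum fun b _ => hm b (Finset.mem_univ b)
        _ = K * h m := by simp [Finset.sum_const, mul_comm]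
    rw [div_le_iff₀ hK0] ; linarith [this]
  have mins : ∀ (h : Fin K → ℝ), (∑ b, h b) = 1 → ∃ m, (∀ b, h m ≤ h b) ∧ h m ≤ 1/(K:ℝ) := by
    intro h hs
    obtain ⟨m, _, hm⟩ := Finset.exists_min_image Finset.univ h hne
    refine ⟨m, fun b => hm b (Finset.mem_univ b), ?_⟩
    have : (K:ℝ) * h m ≤ 1 := by
      calc (K:ℝ) * h m = ∑ _b : Fin K, h m := by simp [Finset.sum_const, mul_comm]
        _ ≤ ∑ b, h b := Finset.sum_le_sum fun b _ => hm b (Finset.mem_univ b)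
        _ = 1 := hs
    rw [le_div_iff₀ hK0]; linarith
  obtain ⟨mf, hmf, hmf1⟩ := avg f hf1
  obtain ⟨mg, hmg, hmg1⟩ := avg g hg1
  have hfne : ∀ c, f c ≠ 0 := by
    intro c hc
    have h1 : g mf = 0 := P1 mf c (by rw [hc]; linarith)
    have h2 : f mf = 0 := P2 mg mf (by rw [h1]; linarith)
    linarith [hmf1, hKinv, h2.le]
  have hgne : ∀ c, g c ≠ 0 := by
    intro c hc
    exact hfne c (P2 mg c (by rw [hc]; linarith))
  have hfd : ∀ b c, f b ≤ f c + 1/(K:ℝ)^3 := by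
    intro b c
    by_contra h
    exact hgne b (P1 b c (by linarith))
  have hgd : ∀ b c, g b ≤ g c + 1/(K:ℝ)^3 := by
    intro b c
    by_contra h
    exact hfne c (P2 b c (by linarith))
  obtain ⟨nf, hnf, hnf1⟩ := mins f hf1
  obtain ⟨ng, hng, hng1⟩ := mins g hg1
  intro b
  refine ⟨⟨?_, ?_⟩, ?_, ?_⟩
  · linarith [hfd mf b, hmf1]
  · linarith [hfd b nf, hnf1]
  · linarith [hgd mg b, hmg1]
  · linarith [hgd b ng, hng1]

/-- Nearly uniform capacities: in any 1.0-well-supported Nash equilibrium of a game in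
class 𝓛 (a `[0,1]` perturbation of the Generalized Matching Pennies prototype with
M = 2K³), each pair of consecutive strategy probabilities sums to `1/K ± 1/K³`. -/
theorem nearly_uniform_capacities (K : ℕ) (hK : 2 ≤ K)
    (Astar : Matrix (Fin (2 * K)) (Fin (2 * K)) ℝ)
    (hAstar : ∀ i j : Fin (2 * K),
      Astar i j = if (i : ℕ) / 2 = (j : ℕ) / 2 then 2 * (K : ℝ) ^ 3 else 0)
    (A B : Matrix (Fin (2 * K)) (Fin (2 * K)) ℝ)
    (hA : ∀ i j, A i j - Astar i j ∈ Set.Icc (0 : ℝ) 1)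
    (hB : ∀ i j, B i j - (-(Astar i j)) ∈ Set.Icc (0 : ℝ) 1)
    (x y : Fin (2 * K) → ℝ)
    (hx : (∀ i, 0 ≤ x i) ∧ ∑ i, x i = 1) (hy : (∀ i, 0 ≤ y i) ∧ ∑ i, y i = 1)
    (hwsB : ∀ j k : Fin (2 * K), (∑ i, x i * B i j) > (∑ i, x i * B i k) + 1 → y k = 0)
    (hwsA : ∀ j k : Fin (2 * K), (∑ i, A j i * y i) > (∑ i, A k i * y i) + 1 → x k = 0) :
    ∀ k : Fin K,
      (1 / (K : ℝ) - 1 / (K : ℝ) ^ 3 ≤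
          x ⟨2 * (k : ℕ), by have := k.isLt; omega⟩ + x ⟨2 * (k : ℕ) + 1, by have := k.isLt; omega⟩ ∧
        x ⟨2 * (k : ℕ), by have := k.isLt; omega⟩ + x ⟨2 * (k : ℕ) + 1, by have := k.isLt; omega⟩ ≤
          1 / (K : ℝ) + 1 / (K : ℝ) ^ 3) ∧
      (1 / (K : ℝ) - 1 / (K : ℝ) ^ 3 ≤
          y ⟨2 * (k : ℕ), by have := k.isLt; omega⟩ + y ⟨2 * (k : ℕ) + 1, by have := k.isLt; omega⟩ ∧
        y ⟨2 * (k : ℕ), by have := k.isLt; omega⟩ + y ⟨2 * (k : ℕ) + 1, by have := k.isLt; omega⟩ ≤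
          1 / (K : ℝ) + 1 / (K : ℝ) ^ 3) := by
  have hK0 : (0:ℝ) < K := by positivity
  have hM0 : (0:ℝ) < 2*(K:ℝ)^3 := by positivity
  have hM2 : (2*(K:ℝ)^3) * (1/(K:ℝ)^3) = 2 := by field_simp
  -- shorthand for pair sums
  set X : Fin K → ℝ := fun b => x ⟨2*(b:ℕ), by have := b.isLt; omega⟩
      + x ⟨2*(b:ℕ)+1, by have := b.isLt; omega⟩ with hXdef
  set Y : Fin K → ℝ := fun b => y ⟨2*(b:ℕ), by have := b.isLt; omega⟩
      + y ⟨2*(b:ℕ)+1, by have := b.isLt; omega⟩ with hYdef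
  -- row payoff bounds
  have rowA : ∀ (b : Fin K) (i : Fin (2*K)), (i:ℕ)/2 = (b:ℕ) →
      2*(K:ℝ)^3 * Y b ≤ ∑ j, A i j * y j ∧ ∑ j, A i j * y j ≤ 2*(K:ℝ)^3 * Y b + 1 := by
    intro b i hi
    have hstar : ∑ j, Astar i j * y j = 2*(K:ℝ)^3 * Y b := by
      have hterm : ∀ j : Fin (2*K), Astar i j * y j
          = (if (j:ℕ)/2 = (b:ℕ) then 2*(K:ℝ)^3 else 0) * y j := by
        intro j
        rw [hAstar, hi]
        by_cases h : (j:ℕ)/2 = (b:ℕ)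
        · simp [h]
        · rw [if_neg (fun hh : (b:ℕ) = (j:ℕ)/2 => h hh.symm), if_neg h]
      rw [Finset.sum_congr rfl (fun j _ => hterm j), sum_block (2*(K:ℝ)^3) (b:ℕ) b.isLt y]
    have hp0 : 0 ≤ ∑ j, (A i j - Astar i j) * y j :=
      Finset.sum_nonneg fun j _ => mul_nonneg (hA i j).1 (hy.1 j)
    have hp1 : ∑ j, (A i j - Astar i j) * y j ≤ 1 := by
      calc ∑ j, (A i j - Astar i j) * y j ≤ ∑ j, 1 * y j :=
          Finset.sum_le_sum fun j _ => mul_le_mul_of_nonneg_right (hA i j).2 (hy.1 j)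
        _ = 1 := by simp [hy.2]
    have hsplit : ∑ j, A i j * y j
        = (∑ j, Astar i j * y j) + ∑ j, (A i j - Astar i j) * y j := by
      rw [← Finset.sum_add_distrib]
      exact Finset.sum_congr rfl fun j _ => by ring
    constructor <;> rw [hsplit, hstar] <;> linarith
  -- column payoff bounds
  have colB : ∀ (b : Fin K) (j : Fin (2*K)), (j:ℕ)/2 = (b:ℕ) →
      -(2*(K:ℝ)^3 * X b) ≤ ∑ i, x i * B i j
        ∧ ∑ i, x i * B i j ≤ -(2*(K:ℝ)^3 * X b) + 1 := by
    intro b j hj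
    have hstar : ∑ i, x i * (-(Astar i j)) = -(2*(K:ℝ)^3 * X b) := by
      have hterm : ∀ i : Fin (2*K), x i * (-(Astar i j))
          = -((if (i:ℕ)/2 = (b:ℕ) then 2*(K:ℝ)^3 else 0) * x i) := by
        intro i
        rw [hAstar, hj]
        by_cases h : (i:ℕ)/2 = (b:ℕ)
        · simp [h]; ring
        · simp [h]
      rw [Finset.sum_congr rfl (fun i _ => hterm i), Finset.sum_neg_distrib,
        sum_block (2*(K:ℝ)^3) (b:ℕ) b.isLt x]
    have hp0 : 0 ≤ ∑ i, x i * (B i j - (-(Astar i j))) :=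
      Finset.sum_nonneg fun i _ => mul_nonneg (hx.1 i) (hB i j).1
    have hp1 : ∑ i, x i * (B i j - (-(Astar i j))) ≤ 1 := by
      calc ∑ i, x i * (B i j - (-(Astar i j))) ≤ ∑ i, x i * 1 :=
          Finset.sum_le_sum fun i _ => mul_le_mul_of_nonneg_left (hB i j).2 (hx.1 i)
        _ = 1 := by simp [hx.2]
    have hsplit : ∑ i, x i * B i j
        = (∑ i, x i * (-(Astar i j))) + ∑ i, x i * (B i j - (-(Astar i j))) := by
      rw [← Finset.sum_add_distrib]
      exact Finset.sum_congr rfl fun i _ => by ring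
    constructor <;> rw [hsplit, hstar] <;> linarith
  -- P1 : X b too large compared to X c kills y on block b
  have hP1 : ∀ b c : Fin K, X b > X c + 1/(K:ℝ)^3 → Y b = 0 := by
    intro b c hgt
    have hMgt : 2*(K:ℝ)^3 * X b > 2*(K:ℝ)^3 * X c + 2 := by
      have key : (2*(K:ℝ)^3) * (1/(K:ℝ)^3) < (2*(K:ℝ)^3) * (X b - X c) :=
        mul_lt_mul_of_pos_left (by linarith) hM0
      rw [hM2] at key
      nlinarith [key]
    have hbb := b.isLt
    have hcc := c.isLt
    have hc := colB c ⟨2*(c:ℕ), by omega⟩ (show 2*(c:ℕ)/2 = (c:ℕ) by omega)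
    have h0 : y ⟨2*(b:ℕ), by omega⟩ = 0 := by
      have hb1 := colB b ⟨2*(b:ℕ), by omega⟩ (show 2*(b:ℕ)/2 = (b:ℕ) by omega)
      exact hwsB ⟨2*(c:ℕ), by omega⟩ ⟨2*(b:ℕ), by omega⟩ (by linarith [hc.1, hb1.2])
    have h1 : y ⟨2*(b:ℕ)+1, by omega⟩ = 0 := by
      have hb1 := colB b ⟨2*(b:ℕ)+1, by omega⟩ (show (2*(b:ℕ)+1)/2 = (b:ℕ) by omega)
      exact hwsB ⟨2*(c:ℕ), by omega⟩ ⟨2*(b:ℕ)+1, by omega⟩ (by linarith [hc.1, hb1.2])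
    show y _ + y _ = 0
    rw [h0, h1]; ring
  -- P2 : Y b too large compared to Y c kills x on block c
  have hP2 : ∀ b c : Fin K, Y b > Y c + 1/(K:ℝ)^3 → X c = 0 := by
    intro b c hgt
    have hMgt : 2*(K:ℝ)^3 * Y b > 2*(K:ℝ)^3 * Y c + 2 := by
      have key : (2*(K:ℝ)^3) * (1/(K:ℝ)^3) < (2*(K:ℝ)^3) * (Y b - Y c) :=
        mul_lt_mul_of_pos_left (by linarith) hM0
      rw [hM2] at key
      nlinarith [key]
    have hbb := b.isLt
    have hcc := c.isLt
    have hb := rowA b ⟨2*(b:ℕ), by omega⟩ (show 2*(b:ℕ)/2 = (b:ℕ) by omega)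
    have h0 : x ⟨2*(c:ℕ), by omega⟩ = 0 := by
      have hc1 := rowA c ⟨2*(c:ℕ), by omega⟩ (show 2*(c:ℕ)/2 = (c:ℕ) by omega)
      exact hwsA ⟨2*(b:ℕ), by omega⟩ ⟨2*(c:ℕ), by omega⟩ (by linarith [hb.1, hc1.2])
    have h1 : x ⟨2*(c:ℕ)+1, by omega⟩ = 0 := by
      have hc1 := rowA c ⟨2*(c:ℕ)+1, by omega⟩ (show (2*(c:ℕ)+1)/2 = (c:ℕ) by omega)
      exact hwsA ⟨2*(b:ℕ), by omega⟩ ⟨2*(c:ℕ)+1, by omega⟩ (by linarith [hb.1, hc1.2])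
    show x _ + x _ = 0
    rw [h0, h1]; ring
  have hXsum : ∑ b, X b = 1 := by rw [hXdef, pair_sum x, hx.2]
  have hYsum : ∑ b, Y b = 1 := by rw [hYdef, pair_sum y, hy.2]
  exact abstract_bounds K hK X Y hXsum hYsum hP1 hP2
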